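/- (Anchor inequality for the inertial forward-backward algorithm.) Under hypotheses (H), with α > 0, let (x_k) be generated by (IFB)_α, fix z ∈ argmin Θ, and set h_k := (1/2)‖x_k − z‖² and α_k := 1 − α/k. Then for every k ≥ 1: h_{k+1} − h_k − α_k(h_k − h_{k−1}) ≤ (1/2)(α_k² + α_k)‖x_k − x_{k−1}‖² − s·(Θ(x_{k+1}) − inf Θ). -/

import Mathlib

open scoped RealInnerProductSpace

lemma hasDerivAt_line {H : Type*} [NormedAddCommGroup H] [InnerProductSpace ℝ H] [CompleteSpace H]
    (Φ : H → ℝ) (hd : Differentiable ℝ Φ) (v d : H) (t : ℝ) :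
    HasDerivAt (fun t : ℝ => Φ (v + t • d)) ⟪gradient Φ (v + t • d), d⟫ t := by
  have hc : HasDerivAt (fun t : ℝ => v + t • d) d t := by
    simpa using ((hasDerivAt_id t).smul_const d).const_add v
  have hg := (hd (v + t • d)).hasGradientAt
  rw [hasGradientAt_iff_hasFDerivAt] at hg
  have hcomp := hg.comp_hasDerivAt t hc
  rw [InnerProductSpace.toDual_apply_apply] at hcomp
  exact hcomp

lemma convex_grad_ineq {H : Type*} [NormedAddCommGroup H] [InnerProductSpace ℝ H] [CompleteSpace H]
    (Φ : H → ℝ) (hc : ConvexOn ℝ Set.univ Φ) (hd : Differentiable ℝ Φ) (a b : H) :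
    Φ a + ⟪gradient Φ a, b - a⟫ ≤ Φ b := by
  have hline := hasDerivAt_line Φ hd a (b - a) 0
  rw [zero_smul, add_zero] at hline
  have hslope : Filter.Tendsto (slope (fun t : ℝ => Φ (a + t • (b - a))) 0) (nhdsWithin 0 (Set.Ioi 0))
      (nhds ⟪gradient Φ a, b - a⟫) :=
    (hasDerivAt_iff_tendsto_slope.mp hline).mono_left
      (nhdsWithin_mono _ fun t ht => by simpa using ne_of_gt ht)
  have hb : ∀ᶠ t in nhdsWithin (0:ℝ) (Set.Ioi 0),
      slope (fun t : ℝ => Φ (a + t • (b - a))) 0 t ≤ Φ b - Φ a := by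
    filter_upwards [Ioc_mem_nhdsGT_of_mem (by norm_num : (0:ℝ) ∈ Set.Ico 0 1)] with t ht
    have hpt : a + t • (b - a) = (1 - t) • a + t • b := by module
    have key : Φ (a + t • (b - a)) ≤ (1 - t) * Φ a + t * Φ b := by
      rw [hpt]
      exact hc.2 (Set.mem_univ a) (Set.mem_univ b) (by linarith [ht.2]) ht.1.le (by ring)
    rw [slope_def_field, div_le_iff₀ (by simpa using ht.1)]
    simp only [zero_smul, add_zero]
    nlinarith [ht.1.le]
  have := le_of_tendsto hslope hb
  linarith

lemma descent_ineq {H : Type*} [NormedAddCommGroup H] [InnerProductSpace ℝ H] [CompleteSpace H]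
    (Φ : H → ℝ) (hd : Differentiable ℝ Φ) (L : ℝ)
    (hlip : ∀ u v : H, ‖gradient Φ u - gradient Φ v‖ ≤ L * ‖u - v‖) (v u : H) :
    Φ u ≤ Φ v + ⟪gradient Φ v, u - v⟫ + L / 2 * ‖u - v‖ ^ 2 := by
  set d := u - v with hdPt
  have hgd : ∀ t : ℝ, HasDerivAt
      (fun t : ℝ => Φ (v + t • d) - (t * ⟪gradient Φ v, d⟫ + L / 2 * ‖d‖ ^ 2 * t ^ 2))
      (⟪gradient Φ (v + t • d), d⟫ - (⟪gradient Φ v, d⟫ + L / 2 * ‖d‖ ^ 2 * (2 * t))) t := by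
    intro t
    have h1 := hasDerivAt_line Φ hd v d t
    have h2 : HasDerivAt (fun t : ℝ => t * ⟪gradient Φ v, d⟫ + L / 2 * ‖d‖ ^ 2 * t ^ 2)
        (⟪gradient Φ v, d⟫ + L / 2 * ‖d‖ ^ 2 * (2 * t)) t := by
      have := ((hasDerivAt_id t).mul_const (⟪gradient Φ v, d⟫)).add
        ((hasDerivAt_pow 2 t).const_mul (L / 2 * ‖d‖ ^ 2))
      exact this.congr_deriv (by push_cast; ring)
    exact h1.sub h2
  have hanti : AntitoneOn
      (fun t : ℝ => Φ (v + t • d) - (t * ⟪gradient Φ v, d⟫ + L / 2 * ‖d‖ ^ 2 * t ^ 2))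
      (Set.Icc 0 1) := by
    apply antitoneOn_of_deriv_nonpos (convex_Icc 0 1)
    · exact fun t _ => ((hgd t).differentiableAt).continuousAt.continuousWithinAt
    · exact fun t ht => ((hgd t).differentiableAt).differentiableWithinAt
    · intro t ht
      rw [interior_Icc] at ht
      rw [(hgd t).deriv]
      have hcs : ⟪gradient Φ (v + t • d), d⟫ - ⟪gradient Φ v, d⟫ ≤
          ‖gradient Φ (v + t • d) - gradient Φ v‖ * ‖d‖ := by
        rw [← inner_sub_left]
        exact real_inner_le_norm _ _
      have hl := hlip (v + t • d) v
      have hnorm : ‖v + t • d - v‖ = t * ‖d‖ := by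
        simp [norm_smul, abs_of_pos ht.1]
      rw [hnorm] at hl
      nlinarith [norm_nonneg d, norm_nonneg (gradient Φ (v + t • d) - gradient Φ v), ht.1.le,
        mul_le_mul_of_nonneg_right hl (norm_nonneg d)]
  have h01 := hanti (Set.left_mem_Icc.mpr zero_le_one) (Set.right_mem_Icc.mpr zero_le_one)
    zero_le_one
  simp only [zero_smul, add_zero, one_smul, zero_mul, mul_zero] at h01
  have hvd : v + d = u := by rw [hdPt]; abel
  rw [hvd] at h01
  nlinarith [h01]

lemma prox_key {H : Type*} [NormedAddCommGroup H] [InnerProductSpace ℝ H]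
    (Ψ : H → EReal)
    (hΨconv : ∀ u v : H, ∀ a b : ℝ, 0 ≤ a → 0 ≤ b → a + b = 1 →
      Ψ (a • u + b • v) ≤ (a : EReal) * Ψ u + (b : EReal) * Ψ v)
    (s : ℝ) (hs : 0 < s) (w ξ p : H)
    (hp : ∀ ζ : H, Ψ p + ((1 / (2 * s) * ‖p - w‖ ^ 2 : ℝ) : EReal) ≤
        Ψ ζ + ((1 / (2 * s) * ‖ζ - w‖ ^ 2 : ℝ) : EReal))
    (hpt : Ψ p ≠ ⊤) (hpb : Ψ p ≠ ⊥) (hξt : Ψ ξ ≠ ⊤) (hξb : Ψ ξ ≠ ⊥) :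
    (Ψ p).toReal ≤ (Ψ ξ).toReal + 1 / (2 * s) * (2 * ⟪ξ - p, p - w⟫) := by
  set ψp := (Ψ p).toReal with hψp
  set ψξ := (Ψ ξ).toReal with hψξ
  set c := 1 / (2 * s) with hc
  have hc0 : 0 < c := by rw [hc]; positivity
  set I := ⟪ξ - p, p - w⟫ with hI
  set N := ‖ξ - p‖ ^ 2 with hN
  have hN0 : 0 ≤ N := by rw [hN]; positivity
  have hkey : ∀ t : ℝ, 0 < t → t ≤ 1 →
      0 ≤ (ψξ - ψp + c * (2 * I)) + t * (c * N) := by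
    intro t ht0 ht1
    have hcv := hΨconv p ξ (1 - t) t (by linarith) ht0.le (by ring)
    have hm := hp ((1 - t) • p + t • ξ)
    have hchain := le_trans hm (add_le_add_left hcv _)
    rw [← EReal.coe_toReal hpt hpb, ← EReal.coe_toReal hξt hξb, ← hψp, ← hψξ] at hchain
    have hr : ψp + c * ‖p - w‖ ^ 2 ≤
        ((1 - t) * ψp + t * ψξ) + c * ‖((1 - t) • p + t • ξ) - w‖ ^ 2 := by
      exact_mod_cast hchain
    have hexp : ‖((1 - t) • p + t • ξ) - w‖ ^ 2 = ‖p - w‖ ^ 2 + 2 * t * I + t ^ 2 * N := by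
      have heq : ((1 - t) • p + t • ξ) - w = (p - w) + t • (ξ - p) := by module
      rw [heq, norm_add_sq_real, real_inner_smul_right, norm_smul, hI, hN]
      simp only [Real.norm_eq_abs, mul_pow, sq_abs]
      rw [real_inner_comm]
      ring
    rw [hexp] at hr
    have hmul : 0 ≤ t * ((ψξ - ψp + c * (2 * I)) + t * (c * N)) := by nlinarith [hr]
    nlinarith [hmul, ht0]
  have heps : ∀ ε : ℝ, 0 < ε → -(ψξ - ψp + c * (2 * I)) ≤ 0 + ε := by
    intro ε hε
    set t := min 1 (ε / (c * N + 1)) with ht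
    have htp : 0 < t := lt_min one_pos (by positivity)
    have hk := hkey t htp (min_le_left _ _)
    have ht2 : t ≤ ε / (c * N + 1) := min_le_right _ _
    have hεeq : ε / (c * N + 1) * (c * N + 1) = ε := by
      field_simp
    have hcN : 0 ≤ c * N := mul_nonneg hc0.le hN0
    nlinarith [hk, ht2, htp.le, hεeq, hcN]
  have := le_of_forall_pos_le_add heps
  linarith

/-- anchor inequality for the inertial forward-backward algorithm
`(IFB)_α`. With `z ∈ argmin Θ`, `h_k = (1/2)‖x_k - z‖²` and `α_k = 1 - α/k`,
for every `k ≥ 1`: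
`h_{k+1} - h_k - α_k (h_k - h_{k-1}) ≤ (1/2)(α_k² + α_k)‖x_k - x_{k-1}‖²
  - s (Θ(x_{k+1}) - min Θ)`. -/
theorem stmt_15
    {H : Type*} [NormedAddCommGroup H] [InnerProductSpace ℝ H] [CompleteSpace H]
    (Φ : H → ℝ) (hΦconv : ConvexOn ℝ Set.univ Φ) (hΦdiff : Differentiable ℝ Φ)
    (L : ℝ) (hL : 0 < L)
    (hlip : ∀ u v : H, ‖gradient Φ u - gradient Φ v‖ ≤ L * ‖u - v‖)
    (Ψ : H → EReal)
    (hΨbot : ∀ u : H, Ψ u ≠ ⊥) (hΨproper : ∃ u : H, Ψ u ≠ ⊤)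
    (hΨconv : ∀ u v : H, ∀ a b : ℝ, 0 ≤ a → 0 ≤ b → a + b = 1 →
      Ψ (a • u + b • v) ≤ (a : EReal) * Ψ u + (b : EReal) * Ψ v)
    (hΨlsc : LowerSemicontinuous Ψ)
    (Θ : H → EReal) (hΘ : ∀ u : H, Θ u = (Φ u : EReal) + Ψ u)
    (z : H) (hz : ∀ u : H, Θ z ≤ Θ u)
    (s : ℝ) (hs : 0 < s) (hsL : s ≤ 1 / L)
    (prox : H → H)
    (hprox : ∀ w ξ : H,
      Ψ (prox w) + ((1 / (2 * s) * ‖prox w - w‖ ^ 2 : ℝ) : EReal) ≤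
        Ψ ξ + ((1 / (2 * s) * ‖ξ - w‖ ^ 2 : ℝ) : EReal))
    (α : ℝ) (hα : 0 < α)
    (x y : ℕ → H)
    (hy : ∀ k : ℕ, 1 ≤ k → y k = x k + (1 - α / (k : ℝ)) • (x k - x (k - 1)))
    (hrec : ∀ k : ℕ, 1 ≤ k → x (k + 1) = prox (y k - s • gradient Φ (y k)))
    (h : ℕ → ℝ) (hh : ∀ k : ℕ, h k = 1 / 2 * ‖x k - z‖ ^ 2) :
    ∀ k : ℕ, 1 ≤ k →
      ((h (k + 1) - h k - (1 - α / (k : ℝ)) * (h k - h (k - 1)) : ℝ) : EReal) ≤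
        ((1 / 2 * ((1 - α / (k : ℝ)) ^ 2 + (1 - α / (k : ℝ)))
            * ‖x k - x (k - 1)‖ ^ 2 : ℝ) : EReal)
          - (s : EReal) * (Θ (x (k + 1)) - Θ z) := by
  intro k hk
  have hyk := hy k hk
  have hxk1 := hrec k hk
  -- finiteness
  obtain ⟨u₀, hu₀⟩ := hΨproper
  have hΘz_top : Θ z ≠ ⊤ := by
    have h1 : Θ u₀ < ⊤ := by
      rw [hΘ u₀]; exact EReal.add_lt_top (EReal.coe_ne_top _) hu₀
    exact ((hz u₀).trans_lt h1).ne
  have hΨz_top : Ψ z ≠ ⊤ := by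
    intro hT
    apply hΘz_top
    rw [hΘ z, hT, EReal.coe_add_top]
  have hΨq_top : Ψ (x (k + 1)) ≠ ⊤ := by
    intro hT
    have hm := hprox (y k - s • gradient Φ (y k)) z
    rw [← hxk1, hT, EReal.top_add_coe, top_le_iff] at hm
    exact (EReal.add_lt_top hΨz_top (EReal.coe_ne_top _)).ne hm
  set ψq := (Ψ (x (k + 1))).toReal with hψq
  set ψz := (Ψ z).toReal with hψz
  -- key inequalities
  have F3 := prox_key Ψ hΨconv s hs (y k - s • gradient Φ (y k)) z (x (k + 1))
    (fun ζ => by rw [hxk1]; exact hprox _ ζ) hΨq_top (hΨbot _) hΨz_top (hΨbot z)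
  have F1 := descent_ineq Φ hΦdiff L hlip (y k) (x (k + 1))
  have F2 := convex_grad_ineq Φ hΦconv hΦdiff (y k) z
  have hsL1 : s * L ≤ 1 := by
    have := mul_le_mul_of_nonneg_right hsL hL.le
    rwa [one_div, inv_mul_cancel₀ hL.ne'] at this
  -- inner-product expansions
  have E1 : ⟪z - x (k + 1), x (k + 1) - (y k - s • gradient Φ (y k))⟫ =
      ⟪z - x (k + 1), x (k + 1) - y k⟫ + s * ⟪z - x (k + 1), gradient Φ (y k)⟫ := by
    have heq : x (k + 1) - (y k - s • gradient Φ (y k)) =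
        (x (k + 1) - y k) + s • gradient Φ (y k) := by abel
    rw [heq, inner_add_right, real_inner_smul_right]
  have E2s : s * ⟪gradient Φ (y k), x (k + 1) - y k⟫ - s * ⟪gradient Φ (y k), z - y k⟫
      + s * ⟪z - x (k + 1), gradient Φ (y k)⟫ = 0 := by
    have c1 : ⟪z, gradient Φ (y k)⟫ = ⟪gradient Φ (y k), z⟫ := real_inner_comm _ _
    have c2 : ⟪x (k + 1), gradient Φ (y k)⟫ = ⟪gradient Φ (y k), x (k + 1)⟫ :=
      real_inner_comm _ _
    simp only [inner_sub_left, inner_sub_right]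
    rw [c1, c2]; ring
  have E3 : ‖z - y k‖ ^ 2 = ‖z - x (k + 1)‖ ^ 2
      + 2 * ⟪z - x (k + 1), x (k + 1) - y k⟫ + ‖x (k + 1) - y k‖ ^ 2 := by
    have heq : z - y k = (z - x (k + 1)) + (x (k + 1) - y k) := by abel
    rw [heq, norm_add_sq_real]
  -- combined estimate
  have hsF1 := mul_le_mul_of_nonneg_left F1 hs.le
  have hsF2 := mul_le_mul_of_nonneg_left F2 hs.le
  have hsF3 := mul_le_mul_of_nonneg_left F3 hs.le
  have hsimpl : s * (ψz + 1 / (2 * s) *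
      (2 * ⟪z - x (k + 1), x (k + 1) - (y k - s • gradient Φ (y k))⟫)) =
      s * ψz + ⟪z - x (k + 1), x (k + 1) - (y k - s • gradient Φ (y k))⟫ := by
    field_simp
  have hLq : s * (L / 2 * ‖x (k + 1) - y k‖ ^ 2) ≤ 1 / 2 * ‖x (k + 1) - y k‖ ^ 2 := by
    nlinarith [mul_nonneg (sub_nonneg.mpr hsL1) (sq_nonneg ‖x (k + 1) - y k‖)]
  have C : s * ((Φ (x (k + 1)) + ψq) - (Φ z + ψz)) ≤
      1 / 2 * ‖z - y k‖ ^ 2 - 1 / 2 * ‖z - x (k + 1)‖ ^ 2 := by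
    linarith [hsF1, hsF2, hsF3, hsimpl, hLq, E1, E2s, E3]
  -- geometric identity
  have E4 : ‖z - y k‖ ^ 2 = ‖z - x k‖ ^ 2
      - 2 * (1 - α / (k : ℝ)) * ⟪z - x k, x k - x (k - 1)⟫
      + (1 - α / (k : ℝ)) ^ 2 * ‖x k - x (k - 1)‖ ^ 2 := by
    have heq : z - y k = (z - x k) - (1 - α / (k : ℝ)) • (x k - x (k - 1)) := by
      rw [hyk]; abel
    rw [heq, norm_sub_sq_real, real_inner_smul_right, norm_smul]
    simp only [Real.norm_eq_abs, mul_pow, sq_abs]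
    ring
  have E5 : ‖x (k - 1) - z‖ ^ 2 = ‖x k - z‖ ^ 2
      - 2 * ⟪x k - z, x k - x (k - 1)⟫ + ‖x k - x (k - 1)‖ ^ 2 := by
    have heq : x (k - 1) - z = (x k - z) - (x k - x (k - 1)) := by abel
    rw [heq, norm_sub_sq_real]
  have E6 : ⟪z - x k, x k - x (k - 1)⟫ = -⟪x k - z, x k - x (k - 1)⟫ := by
    rw [← neg_sub (x k) z, inner_neg_left]
  have e7 : ‖z - x k‖ ^ 2 = ‖x k - z‖ ^ 2 := by rw [norm_sub_rev]
  have e8 : ‖z - x (k + 1)‖ ^ 2 = ‖x (k + 1) - z‖ ^ 2 := by rw [norm_sub_rev]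
  have Did : 1 / 2 * ‖z - y k‖ ^ 2 - 1 / 2 * ‖x k - z‖ ^ 2
      - (1 - α / (k : ℝ)) * (1 / 2 * ‖x k - z‖ ^ 2 - 1 / 2 * ‖x (k - 1) - z‖ ^ 2)
      = 1 / 2 * ((1 - α / (k : ℝ)) ^ 2 + (1 - α / (k : ℝ))) * ‖x k - x (k - 1)‖ ^ 2 := by
    linear_combination (1 / 2) * E4 + (1 / 2) * e7 + ((1 - α / (k : ℝ)) / 2) * E5
      - (1 - α / (k : ℝ)) * E6
  have Treal : h (k + 1) - h k - (1 - α / (k : ℝ)) * (h k - h (k - 1)) ≤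
      1 / 2 * ((1 - α / (k : ℝ)) ^ 2 + (1 - α / (k : ℝ))) * ‖x k - x (k - 1)‖ ^ 2
      - s * ((Φ (x (k + 1)) + ψq) - (Φ z + ψz)) := by
    rw [hh (k + 1), hh k, hh (k - 1)]
    linarith [C, Did, e8]
  -- back to EReal
  have hΘq : Θ (x (k + 1)) = ((Φ (x (k + 1)) + ψq : ℝ) : EReal) := by
    rw [hΘ, hψq, ← EReal.coe_toReal hΨq_top (hΨbot _)]
    norm_cast
  have hΘz' : Θ z = ((Φ z + ψz : ℝ) : EReal) := by
    rw [hΘ, hψz, ← EReal.coe_toReal hΨz_top (hΨbot _)]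
    norm_cast
  rw [hΘq, hΘz']
  exact_mod_cast Treal
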